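/- arXiv:1202.4784 — 3 statements merged into one kernel-verified Lean document; each statement's English description precedes it below -/
import Mathlib

section
/- Let 0 < c < 1, let E be a normed vector space over ℝ, and let (A(n))_{n∈ℕ} be a bounded sequence in E satisfying the uniform Cesàro condition: for every ε > 0 there exists L such that ‖(1/(N−M)) Σ_{n=M}^{N−1} A(n)‖ ≤ ε whenever N − M ≥ L. Then lim_{N→∞} ‖(1/N) Σ_{n=1}^{N} A(⌊n^{c}⌋)‖ = 0. -/
open Filter Finset

private noncomputable def aaa (c : ℝ) (k : ℕ) : ℕ := ⌈(k : ℝ) ^ (1/c)⌉₊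

private lemma aaa_mono {c : ℝ} (hc0 : 0 < c) : Monotone (aaa c) := fun j k hjk =>
  Nat.ceil_mono (Real.rpow_le_rpow (by positivity) (Nat.cast_le.2 hjk) (by positivity))

private lemma aaa_le_iff {c : ℝ} (hc0 : 0 < c) (k n : ℕ) :
    aaa c k ≤ n ↔ k ≤ ⌊(n : ℝ) ^ c⌋₊ := by
  have hkey : (((k : ℝ) ^ (1/c)) ^ c) = (k : ℝ) := by
    rw [← Real.rpow_mul (by positivity), one_div, inv_mul_cancel₀ hc0.ne', Real.rpow_one]
  rw [Nat.le_floor_iff (by positivity), aaa, Nat.ceil_le]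
  constructor
  · intro h
    calc (k : ℝ) = ((k : ℝ) ^ (1/c)) ^ c := hkey.symm
    _ ≤ (n : ℝ) ^ c := Real.rpow_le_rpow (by positivity) h hc0.le
  · intro h
    have := Real.rpow_le_rpow (by positivity) h (by positivity : (0:ℝ) ≤ 1/c)
    rwa [← Real.rpow_mul (by positivity : (0:ℝ) ≤ (n:ℝ)), mul_one_div, div_self hc0.ne',
      Real.rpow_one] at this

private lemma aaa_one {c : ℝ} : aaa c 1 = 1 := by
  simp [aaa]

private lemma block_sum {E : Type*} [AddCommMonoid E] {c : ℝ} (hc0 : 0 < c)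
    (φ : ℕ → E) (K : ℕ) :
    ∑ n ∈ Ico (aaa c 1) (aaa c K), φ ⌊(n : ℝ) ^ c⌋₊
      = ∑ k ∈ Ico 1 K, (aaa c (k+1) - aaa c k) • φ k := by
  induction K with
  | zero =>
    have h0 : aaa c 0 = 0 := by
      simp only [aaa, Nat.cast_zero, Real.zero_rpow (one_div_ne_zero hc0.ne'), Nat.ceil_zero]
    rw [h0]
    simp
  | succ K ih =>
    rcases Nat.eq_zero_or_pos K with rfl | hK
    · simp [aaa_one]
    · rw [← Finset.sum_Ico_consecutive _ (aaa_mono hc0 hK) (aaa_mono hc0 (Nat.le_succ K)), ih,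
        Finset.sum_Ico_succ_top hK]
      congr 1
      have hval : ∀ n ∈ Ico (aaa c K) (aaa c (K+1)), φ ⌊(n : ℝ) ^ c⌋₊ = φ K := by
        intro n hn
        rw [mem_Ico] at hn
        have h1 : K ≤ ⌊(n : ℝ) ^ c⌋₊ := (aaa_le_iff hc0 K n).1 hn.1
        have h2 : ¬ (K + 1 ≤ ⌊(n : ℝ) ^ c⌋₊) := fun h =>
          absurd ((aaa_le_iff hc0 (K+1) n).2 h) (not_le.2 hn.2)
        congr 1
        omega
      rw [Finset.sum_congr rfl hval, Finset.sum_const, Nat.card_Ico]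

set_option maxHeartbeats 1600000 in
/-- Let `0 < c < 1` and let `(A(n))` be a bounded sequence in a normed
space satisfying the uniform Cesàro condition (the averages over long intervals are small in
norm). Then `lim_N ‖(1/N) Σ_{n=1}^N A(⌊n^c⌋)‖ = 0`. -/
theorem statement15 {E : Type*} [NormedAddCommGroup E] [NormedSpace ℝ E]
    (c : ℝ) (hc0 : 0 < c) (hc1 : c < 1)
    (A : ℕ → E) (C : ℝ) (hA : ∀ n, ‖A n‖ ≤ C)
    (hCes : ∀ ε : ℝ, 0 < ε → ∃ L : ℕ, ∀ M N : ℕ, M + L ≤ N →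
      ‖((N : ℝ) - (M : ℝ))⁻¹ • ∑ n ∈ Finset.Ico M N, A n‖ ≤ ε) :
    Tendsto (fun N : ℕ => ‖(N : ℝ)⁻¹ • ∑ n ∈ Finset.Icc 1 N, A ⌊(n : ℝ) ^ c⌋₊‖)
      atTop (nhds 0) := by
  have hC0 : 0 ≤ C := (norm_nonneg _).trans (hA 0)
  set p : ℝ := 1/c with hpdef
  have hp0 : 0 < p := by rw [hpdef]; positivity
  have hcp : c * p = 1 := by rw [hpdef]; field_simp
  have hp1 : 1 ≤ p := by nlinarith
  have bern : ∀ x : ℝ, 1 ≤ x → x ^ p - (x - 1) ^ p ≤ p * x ^ (p - 1) := by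
    intro x hx
    have hx0 : (0:ℝ) < x := lt_of_lt_of_le one_pos hx
    have h5 : 1/x ≤ 1 := by rw [div_le_one hx0]; exact hx
    have h5' : (0:ℝ) ≤ 1/x := by positivity
    have hs : (-1:ℝ) ≤ -(1/x) := by linarith
    have h1 : 1 + p * (-(1/x)) ≤ (1 + -(1/x)) ^ p := one_add_mul_self_le_rpow_one_add hs hp1
    have h2 : (x - 1) ^ p = x ^ p * (1 + -(1/x)) ^ p := by
      rw [← Real.mul_rpow hx0.le (by linarith)]
      congr 1
      field_simp
      try ring
    have h3 : p * (x ^ p * (1/x)) = p * x ^ (p - 1) := by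
      rw [Real.rpow_sub hx0, Real.rpow_one]
      ring
    have h4 : (0:ℝ) ≤ x ^ p := Real.rpow_nonneg hx0.le p
    nlinarith [mul_le_mul_of_nonneg_left h1 h4]
  have bern2 : ∀ x : ℝ, 1 ≤ x → 2 * x ^ p ≤ (x - 1) ^ p + (x + 1) ^ p := by
    intro x hx
    have hx0 : (0:ℝ) < x := lt_of_lt_of_le one_pos hx
    have h5 : 1/x ≤ 1 := by rw [div_le_one hx0]; exact hx
    have h5' : (0:ℝ) ≤ 1/x := by positivity
    have h1a : 1 + p * (-(1/x)) ≤ (1 + -(1/x)) ^ p :=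
      one_add_mul_self_le_rpow_one_add (by linarith) hp1
    have h1b : 1 + p * (1/x) ≤ (1 + 1/x) ^ p :=
      one_add_mul_self_le_rpow_one_add (by linarith) hp1
    have h2a : (x - 1) ^ p = x ^ p * (1 + -(1/x)) ^ p := by
      rw [← Real.mul_rpow hx0.le (by linarith)]
      congr 1
      field_simp
      try ring
    have h2b : (x + 1) ^ p = x ^ p * (1 + 1/x) ^ p := by
      rw [← Real.mul_rpow hx0.le (by linarith)]
      congr 1
      field_simp
      try ring
    have h4 : (0:ℝ) ≤ x ^ p := Real.rpow_nonneg hx0.le p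
    nlinarith [mul_le_mul_of_nonneg_left h1a h4, mul_le_mul_of_nonneg_left h1b h4]
  -- the monotone increment function
  set D : ℕ → ℝ := fun k => ((k:ℝ)+1) ^ p - (k:ℝ) ^ p with hDdef
  have hDmono : Monotone D := by
    apply monotone_nat_of_le_succ
    intro k
    have hx1 : (1:ℝ) ≤ (k:ℝ) + 1 := by
      have := Nat.cast_nonneg (α := ℝ) k
      linarith
    have hb := bern2 ((k:ℝ)+1) hx1
    have e1 : ((k:ℝ)+1) - 1 = (k:ℝ) := by ring
    have e2 : ((k:ℝ)+1) + 1 = (k:ℝ) + 2 := by ring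
    rw [e1, e2] at hb
    simp only [hDdef]
    push_cast
    have e3 : ((k:ℝ)+1) + 1 = (k:ℝ) + 2 := by ring
    rw [e3]
    linarith
  have hD0 : D 0 = 1 := by
    simp only [hDdef, Nat.cast_zero, zero_add, Real.one_rpow,
      Real.zero_rpow hp0.ne']
    ring
  rw [Metric.tendsto_atTop]
  intro ε hε
  obtain ⟨L, hL⟩ := hCes (ε/4) (by positivity)
  set H := max L 1 with hHdef
  have hH1 : 1 ≤ H := le_max_right L 1
  have hHL : L ≤ H := le_max_left L 1
  have hHpos : (0:ℝ) < (H:ℝ) := by exact_mod_cast hH1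
  -- main quantitative estimate
  have key : ∀ N : ℕ, 1 ≤ N →
      ‖∑ n ∈ Finset.Icc 1 N, A ⌊(n : ℝ) ^ c⌋₊‖ ≤
        ε/4 * N + C * H * (2*p*(N:ℝ)^((1:ℝ)-c) + 2*(N:ℝ)^c + 1)
          + C * (p*(N:ℝ)^((1:ℝ)-c) + 1) := by
    intro N hN
    have hN0 : (0:ℝ) < (N:ℝ) := by exact_mod_cast hN
    have hN1 : (1:ℝ) ≤ (N:ℝ) := by exact_mod_cast hN
    have hNc1 : (1:ℝ) ≤ (N:ℝ)^c := by
      calc (1:ℝ) = (1:ℝ)^c := (Real.one_rpow c).symm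
      _ ≤ (N:ℝ)^c := Real.rpow_le_rpow zero_le_one hN1 hc0.le
    set K := ⌊(N:ℝ)^c⌋₊ with hKdef
    have hK1 : 1 ≤ K := by
      rw [hKdef]
      apply Nat.le_floor
      rw [Nat.cast_one]
      exact hNc1
    set a : ℕ → ℕ := aaa c with hadef
    have ha1 : a 1 = 1 := aaa_one
    have haK_le : a K ≤ N := (aaa_le_iff hc0 K N).2 le_rfl
    have haK1 : 1 ≤ a K := by
      calc 1 = a 1 := ha1.symm
      _ ≤ a K := aaa_mono hc0 hK1
    have haeq : ∀ k, (a k : ℝ) = (aaa c k : ℝ) := fun k => rfl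
    have haapprox : ∀ k : ℕ, ((k:ℝ))^p ≤ (a k : ℝ) ∧ ((a k : ℝ)) < (k:ℝ)^p + 1 := by
      intro k
      constructor
      · exact Nat.le_ceil _
      · exact Nat.ceil_lt_add_one (by positivity)
    -- split off the last partial block
    have hsplit : ∑ n ∈ Finset.Icc 1 N, A ⌊(n : ℝ) ^ c⌋₊
        = (∑ n ∈ Ico 1 (a K), A ⌊(n : ℝ) ^ c⌋₊)
          + ∑ n ∈ Ico (a K) (N+1), A ⌊(n : ℝ) ^ c⌋₊ := by
      rw [← Finset.Ico_add_one_right_eq_Icc,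
        ← Finset.sum_Ico_consecutive _ haK1 (by omega : a K ≤ N+1)]
    -- the tail
    have htail : ‖∑ n ∈ Ico (a K) (N+1), A ⌊(n : ℝ) ^ c⌋₊‖ ≤ ((N + 1 - a K : ℕ) : ℝ) * C := by
      have hconst : ∀ n ∈ Ico (a K) (N+1), A ⌊(n : ℝ) ^ c⌋₊ = A K := by
        intro n hn
        rw [mem_Ico] at hn
        have h1 : K ≤ ⌊(n : ℝ) ^ c⌋₊ := (aaa_le_iff hc0 K n).1 hn.1
        have h2 : ⌊(n : ℝ) ^ c⌋₊ ≤ K := by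
          rw [hKdef]
          exact Nat.floor_le_floor (Real.rpow_le_rpow (by positivity)
            (by exact_mod_cast (by omega : n ≤ N)) hc0.le)
        congr 1
        omega
      rw [Finset.sum_congr rfl hconst, Finset.sum_const, Nat.card_Ico]
      calc ‖(N + 1 - a K) • A K‖ ≤ ((N + 1 - a K : ℕ) : ℝ) * ‖A K‖ := norm_nsmul_le
      _ ≤ ((N + 1 - a K : ℕ) : ℝ) * C :=
          mul_le_mul_of_nonneg_left (hA K) (Nat.cast_nonneg _)
    -- the head: shifted sums
    set P : ℕ → E := fun i => ∑ n ∈ Ico 1 (a K), A (⌊(n : ℝ) ^ c⌋₊ + i) with hPdef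
    have hP0 : P 0 = ∑ n ∈ Ico 1 (a K), A ⌊(n : ℝ) ^ c⌋₊ := by
      simp only [hPdef, add_zero]
    have hPrep : ∀ i, P i = ∑ k ∈ Ico 1 K, (a (k+1) - a k) • A (k + i) := by
      intro i
      have hIco : Ico 1 (a K) = Ico (aaa c 1) (aaa c K) := by rw [← hadef, ha1]
      rw [hPdef]
      simp only
      rw [hIco]
      exact block_sum hc0 (fun m => A (m + i)) K
    set G : ℕ → ℝ := fun k => if 1 ≤ k ∧ k < K then ((a (k+1) - a k : ℕ) : ℝ) else 0
      with hGdef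
    have hG0 : ∀ k, 0 ≤ G k := by
      intro k
      simp only [hGdef]
      split
      · exact Nat.cast_nonneg _
      · exact le_refl 0
    have hGzero : G 0 = 0 := by simp [hGdef]
    have hGK : G K = 0 := by simp [hGdef]
    have hPrep' : ∀ i, P i = ∑ k ∈ Ico 1 (K+1), G k • A (k + i) := by
      intro i
      rw [hPrep i, Finset.sum_Ico_succ_top hK1, hGK, zero_smul, add_zero]
      apply Finset.sum_congr rfl
      intro k hk
      rw [mem_Ico] at hk
      have : G k = ((a (k+1) - a k : ℕ) : ℝ) := by
        simp only [hGdef]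
        rw [if_pos ⟨hk.1, hk.2⟩]
      rw [this, Nat.cast_smul_eq_nsmul]
    have hshift : ∀ i, P (i+1) = ∑ k ∈ Ico 1 (K+1), G (k-1) • A (k + i) := by
      intro i
      rw [hPrep' (i+1)]
      have e1 : ∑ k ∈ Ico 1 (K+1), G k • A (k+(i+1))
          = ∑ k ∈ Ico 2 (K+2), G (k-1) • A (k+i) := by
        rw [Finset.sum_Ico_eq_sum_range, Finset.sum_Ico_eq_sum_range]
        simp only [Nat.add_sub_cancel]
        apply Finset.sum_congr rfl
        intro j _
        rw [show 2 + j - 1 = 1 + j from by omega, show 2 + j + i = 1 + j + (i+1) from by omega]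
      rw [e1, Finset.sum_Ico_succ_top (show 2 ≤ K+1 by omega),
        Finset.sum_eq_sum_Ico_succ_bot (show 1 < K+1 by omega)]
      rw [show K + 1 - 1 = K from by omega, show (1:ℕ) - 1 = 0 from rfl, hGK, hGzero,
        zero_smul, zero_smul, add_zero, zero_add]
    have hdiff : ∀ i, P i - P (i+1) = ∑ k ∈ Ico 1 (K+1), (G k - G (k-1)) • A (k + i) := by
      intro i
      rw [hPrep' i, hshift i, ← Finset.sum_sub_distrib]
      apply Finset.sum_congr rfl
      intro k _
      rw [sub_smul]
    set V : ℝ := ∑ k ∈ Ico 1 (K+1), |G k - G (k-1)| with hVdef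
    have hV0 : 0 ≤ V := Finset.sum_nonneg fun _ _ => abs_nonneg _
    have hCV : 0 ≤ C * V := mul_nonneg hC0 hV0
    have hdiffnorm : ∀ i, ‖P i - P (i+1)‖ ≤ C * V := by
      intro i
      rw [hdiff i]
      calc ‖∑ k ∈ Ico 1 (K+1), (G k - G (k-1)) • A (k + i)‖
          ≤ ∑ k ∈ Ico 1 (K+1), ‖(G k - G (k-1)) • A (k + i)‖ := norm_sum_le _ _
      _ ≤ ∑ k ∈ Ico 1 (K+1), |G k - G (k-1)| * C := by
          apply Finset.sum_le_sum
          intro k _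
          rw [norm_smul, Real.norm_eq_abs]
          exact mul_le_mul_of_nonneg_left (hA _) (abs_nonneg _)
      _ = C * V := by rw [← Finset.sum_mul, hVdef, mul_comm]
    have hP0h : ∀ h : ℕ, h ≤ H → ‖P 0 - P h‖ ≤ (H:ℝ) * (C * V) := by
      intro h hh
      have htel : P 0 - P h = ∑ i ∈ range h, (P i - P (i+1)) := (Finset.sum_range_sub' P h).symm
      rw [htel]
      calc ‖∑ i ∈ range h, (P i - P (i+1))‖ ≤ ∑ i ∈ range h, ‖P i - P (i+1)‖ := norm_sum_le _ _
      _ ≤ ∑ _i ∈ range h, C * V := Finset.sum_le_sum fun i _ => hdiffnorm i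
      _ = (h:ℝ) * (C * V) := by rw [Finset.sum_const, card_range, nsmul_eq_mul]
      _ ≤ (H:ℝ) * (C * V) := mul_le_mul_of_nonneg_right (by exact_mod_cast hh) hCV
    -- the Cesàro window estimate
    have hTh : ∀ n : ℕ, ‖∑ h ∈ range H, A (⌊(n : ℝ) ^ c⌋₊ + h)‖ ≤ (H:ℝ) * (ε/4) := by
      intro n
      set M := ⌊(n : ℝ) ^ c⌋₊ with hMdef
      have h1 := hL M (M + H) (by omega)
      rw [Finset.sum_Ico_eq_sum_range, show M + H - M = H from by omega] at h1
      have h2 : ((M + H : ℕ) : ℝ) - (M:ℝ) = (H:ℝ) := by push_cast; ring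
      rw [h2, norm_smul, Real.norm_eq_abs, abs_inv, Nat.abs_cast] at h1
      calc ‖∑ h ∈ range H, A (M + h)‖
          = (H:ℝ) * ((H:ℝ)⁻¹ * ‖∑ h ∈ range H, A (M + h)‖) := by
            field_simp
      _ ≤ (H:ℝ) * (ε/4) := mul_le_mul_of_nonneg_left h1 hHpos.le
    have hdecomp : P 0 = (H:ℝ)⁻¹ • (∑ h ∈ range H, P h)
        + (H:ℝ)⁻¹ • (∑ h ∈ range H, (P 0 - P h)) := by
      rw [← smul_add, ← Finset.sum_add_distrib]
      simp only [add_sub_cancel]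
      rw [Finset.sum_const, card_range, ← Nat.cast_smul_eq_nsmul ℝ, smul_smul,
        inv_mul_cancel₀ hHpos.ne', one_smul]
    have hnormT : ‖∑ h ∈ range H, P h‖ ≤ ((a K - 1 : ℕ) : ℝ) * ((H:ℝ) * (ε/4)) := by
      have hsw : ∑ h ∈ range H, P h
          = ∑ n ∈ Ico 1 (a K), ∑ h ∈ range H, A (⌊(n : ℝ) ^ c⌋₊ + h) := by
        simp only [hPdef]
        exact Finset.sum_comm
      rw [hsw]
      calc ‖∑ n ∈ Ico 1 (a K), ∑ h ∈ range H, A (⌊(n : ℝ) ^ c⌋₊ + h)‖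
          ≤ ∑ n ∈ Ico 1 (a K), ‖∑ h ∈ range H, A (⌊(n : ℝ) ^ c⌋₊ + h)‖ := norm_sum_le _ _
      _ ≤ ∑ _n ∈ Ico 1 (a K), (H:ℝ) * (ε/4) := Finset.sum_le_sum fun n _ => hTh n
      _ = ((a K - 1 : ℕ) : ℝ) * ((H:ℝ) * (ε/4)) := by
          rw [Finset.sum_const, Nat.card_Ico, nsmul_eq_mul]
    have hnormD : ‖∑ h ∈ range H, (P 0 - P h)‖ ≤ (H:ℝ) * ((H:ℝ) * (C * V)) := by
      calc ‖∑ h ∈ range H, (P 0 - P h)‖ ≤ ∑ h ∈ range H, ‖P 0 - P h‖ := norm_sum_le _ _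
      _ ≤ ∑ h ∈ range H, (H:ℝ) * (C * V) :=
          Finset.sum_le_sum fun h hh => hP0h h (le_of_lt (mem_range.1 hh))
      _ = (H:ℝ) * ((H:ℝ) * (C * V)) := by rw [Finset.sum_const, card_range, nsmul_eq_mul]
    have hcard1 : ((a K - 1 : ℕ) : ℝ) ≤ (N:ℝ) := by
      have : a K - 1 ≤ N := by omega
      exact_mod_cast this
    have hhead : ‖P 0‖ ≤ ε/4 * (N:ℝ) + (H:ℝ) * (C * V) := by
      rw [hdecomp]
      have hninv : (0:ℝ) ≤ (H:ℝ)⁻¹ := inv_nonneg.2 hHpos.le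
      calc ‖(H:ℝ)⁻¹ • (∑ h ∈ range H, P h) + (H:ℝ)⁻¹ • (∑ h ∈ range H, (P 0 - P h))‖
          ≤ ‖(H:ℝ)⁻¹ • (∑ h ∈ range H, P h)‖ + ‖(H:ℝ)⁻¹ • (∑ h ∈ range H, (P 0 - P h))‖ :=
            norm_add_le _ _
      _ = (H:ℝ)⁻¹ * ‖∑ h ∈ range H, P h‖ + (H:ℝ)⁻¹ * ‖∑ h ∈ range H, (P 0 - P h)‖ := by
            rw [norm_smul, norm_smul, Real.norm_eq_abs, abs_of_nonneg hninv]
      _ ≤ (H:ℝ)⁻¹ * (((a K - 1 : ℕ) : ℝ) * ((H:ℝ) * (ε/4)))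
            + (H:ℝ)⁻¹ * ((H:ℝ) * ((H:ℝ) * (C * V))) := by
            exact add_le_add (mul_le_mul_of_nonneg_left hnormT hninv)
              (mul_le_mul_of_nonneg_left hnormD hninv)
      _ = ((a K - 1 : ℕ) : ℝ) * (ε/4) + (H:ℝ) * (C * V) := by
            field_simp
      _ ≤ ε/4 * (N:ℝ) + (H:ℝ) * (C * V) := by
            have := mul_le_mul_of_nonneg_right hcard1 (by positivity : (0:ℝ) ≤ ε/4)
            linarith
    -- total variation estimate
    have hGapprox : ∀ k : ℕ, k < K → |G k - D k| ≤ 1 := by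
      intro k hk
      rcases Nat.eq_zero_or_pos k with rfl | hk1
      · rw [hGzero, hD0]
        norm_num
      · have hGk : G k = ((a (k+1) : ℝ) - (a k : ℝ)) := by
          simp only [hGdef]
          rw [if_pos ⟨hk1, hk⟩, Nat.cast_sub (aaa_mono hc0 (Nat.le_succ k))]
        obtain ⟨l1, l2⟩ := haapprox (k+1)
        obtain ⟨l3, l4⟩ := haapprox k
        push_cast at l1 l2
        rw [hGk]
        simp only [hDdef]
        rw [abs_le]
        constructor <;> linarith
    have hVk : ∀ k ∈ Ico 1 K, |G k - G (k-1)| ≤ (D k - D (k-1)) + 2 := by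
      intro k hk
      rw [mem_Ico] at hk
      have h1 := hGapprox k hk.2
      have h2 := hGapprox (k-1) (by omega)
      have h3 : D (k-1) ≤ D k := hDmono (by omega)
      have e : G k - G (k-1) = (G k - D k) + (D k - D (k-1)) + (D (k-1) - G (k-1)) := by ring
      rw [e]
      refine (abs_add_three _ _ _).trans ?_
      rw [abs_of_nonneg (by linarith : (0:ℝ) ≤ D k - D (k-1)), abs_sub_comm (D (k-1))]
      linarith [abs_le.1 h1, abs_le.1 h2]
    have htel2 : ∑ k ∈ Ico 1 K, (D k - D (k-1)) = D (K-1) - D 0 := by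
      rw [Finset.sum_Ico_eq_sum_range]
      calc ∑ j ∈ range (K-1), (D (1+j) - D (1+j-1))
          = ∑ j ∈ range (K-1), (D (j+1) - D j) := by
            apply Finset.sum_congr rfl
            intro j _
            rw [show 1 + j - 1 = j from by omega, show 1 + j = j + 1 from by omega]
      _ = D (K-1) - D 0 := Finset.sum_range_sub D (K-1)
    have hlast : |G K - G (K-1)| ≤ D (K-1) + 1 := by
      have h2 := hGapprox (K-1) (by omega)
      rw [hGK, zero_sub, abs_neg, abs_of_nonneg (hG0 _)]
      linarith [abs_le.1 h2]
    have hVbound : V ≤ 2 * D (K-1) + 2*(K:ℝ) + 1 := by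
      have hsplitV : V = (∑ k ∈ Ico 1 K, |G k - G (k-1)|) + |G K - G (K-1)| := by
        rw [hVdef, Finset.sum_Ico_succ_top hK1]
      have hmain : ∑ k ∈ Ico 1 K, |G k - G (k-1)| ≤ D (K-1) - D 0 + 2*((K:ℝ)-1) := by
        calc ∑ k ∈ Ico 1 K, |G k - G (k-1)| ≤ ∑ k ∈ Ico 1 K, ((D k - D (k-1)) + 2) :=
            Finset.sum_le_sum hVk
        _ = (∑ k ∈ Ico 1 K, (D k - D (k-1))) + (K-1 : ℕ) * 2 := by
            rw [Finset.sum_add_distrib, Finset.sum_const, Nat.card_Ico, nsmul_eq_mul]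
        _ = D (K-1) - D 0 + 2*((K:ℝ)-1) := by
            rw [htel2, Nat.cast_sub hK1]
            push_cast
            ring
      rw [hsplitV]
      have hD0' := hD0
      linarith
    have hKN : (K:ℝ) ≤ (N:ℝ)^c := Nat.floor_le (by positivity)
    have hexp : ((N:ℝ)^c)^(p-1) = (N:ℝ)^((1:ℝ)-c) := by
      rw [← Real.rpow_mul (Nat.cast_nonneg N)]
      congr 1
      rw [mul_sub, hcp, mul_one]
    have hDK : D (K-1) ≤ p * (N:ℝ)^((1:ℝ)-c) := by
      have e : ((K-1:ℕ):ℝ) = (K:ℝ) - 1 := by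
        rw [Nat.cast_sub hK1, Nat.cast_one]
      have hKr : (1:ℝ) ≤ (K:ℝ) := by exact_mod_cast hK1
      have hb := bern (K:ℝ) hKr
      have hDeq : D (K-1) = (K:ℝ)^p - ((K:ℝ)-1)^p := by
        simp only [hDdef]
        rw [e, sub_add_cancel]
      rw [hDeq]
      refine hb.trans ?_
      have h1 : (K:ℝ)^(p-1) ≤ ((N:ℝ)^c)^(p-1) :=
        Real.rpow_le_rpow (Nat.cast_nonneg K) hKN (by linarith)
      rw [hexp] at h1
      exact mul_le_mul_of_nonneg_left h1 hp0.le
    have htailcard : ((N + 1 - a K : ℕ):ℝ) ≤ p * (N:ℝ)^((1:ℝ)-c) + 1 := by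
      have h1 : ((N + 1 - a K : ℕ):ℝ) = (N:ℝ) + 1 - (a K : ℝ) := by
        rw [Nat.cast_sub (by omega)]
        push_cast
        ring
      rw [h1]
      have h2 : ((K:ℝ))^p ≤ (a K : ℝ) := (haapprox K).1
      have h3 : (N:ℝ)^c - 1 ≤ (K:ℝ) := by
        have := Nat.lt_floor_add_one ((N:ℝ)^c)
        rw [← hKdef] at this
        linarith
      have h4 : ((N:ℝ)^c - 1)^p ≤ (K:ℝ)^p :=
        Real.rpow_le_rpow (by linarith) h3 hp0.le
      have h5 : ((N:ℝ)^c)^p = (N:ℝ) := by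
        rw [← Real.rpow_mul (Nat.cast_nonneg N), hcp, Real.rpow_one]
      have h6 := bern ((N:ℝ)^c) hNc1
      rw [h5, hexp] at h6
      have e2 : (N:ℝ)^c - 1 = (N:ℝ)^c - 1 := rfl
      linarith
    have hVfinal : V ≤ 2*p*(N:ℝ)^((1:ℝ)-c) + 2*(N:ℝ)^c + 1 := by
      linarith [hDK, hKN, hVbound]
    -- assemble
    rw [hsplit]
    calc ‖(∑ n ∈ Ico 1 (a K), A ⌊(n : ℝ) ^ c⌋₊) + ∑ n ∈ Ico (a K) (N+1), A ⌊(n : ℝ) ^ c⌋₊‖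
        ≤ ‖∑ n ∈ Ico 1 (a K), A ⌊(n : ℝ) ^ c⌋₊‖ + ‖∑ n ∈ Ico (a K) (N+1), A ⌊(n : ℝ) ^ c⌋₊‖ :=
          norm_add_le _ _
    _ ≤ (ε/4 * (N:ℝ) + (H:ℝ) * (C * V)) + ((N + 1 - a K : ℕ) : ℝ) * C := by
          rw [← hP0]
          exact add_le_add hhead htail
    _ ≤ ε/4 * N + C * H * (2*p*(N:ℝ)^((1:ℝ)-c) + 2*(N:ℝ)^c + 1)
          + C * (p*(N:ℝ)^((1:ℝ)-c) + 1) := by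
          have t1 : (H:ℝ) * (C * V) ≤ C * H * (2*p*(N:ℝ)^((1:ℝ)-c) + 2*(N:ℝ)^c + 1) := by
            have h := mul_le_mul_of_nonneg_left hVfinal (mul_nonneg hC0 hHpos.le)
            calc (H:ℝ) * (C * V) = C * H * V := by ring
            _ ≤ C * H * (2*p*(N:ℝ)^((1:ℝ)-c) + 2*(N:ℝ)^c + 1) := h
          have t2 : ((N + 1 - a K : ℕ) : ℝ) * C ≤ C * (p*(N:ℝ)^((1:ℝ)-c) + 1) := by
            have h := mul_le_mul_of_nonneg_left htailcard hC0
            calc ((N + 1 - a K : ℕ) : ℝ) * C = C * ((N + 1 - a K : ℕ) : ℝ) := by ring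
            _ ≤ C * (p*(N:ℝ)^((1:ℝ)-c) + 1) := h
          linarith
  -- conclusion from the quantitative estimate
  set m : ℝ := min c (1-c) with hmdef
  have hm0 : 0 < m := by
    rw [hmdef]
    exact lt_min hc0 (by linarith)
  have hmc : m ≤ c := min_le_left _ _
  have hmc' : m ≤ 1 - c := min_le_right _ _
  set D₀ : ℝ := C * H * (2*p) + C * H * 2 + C * H + C * p + C with hD₀def
  have hD₀0 : 0 ≤ D₀ := by
    have h1 : (0:ℝ) ≤ C * H := mul_nonneg hC0 hHpos.le
    have h2 : (0:ℝ) ≤ p := hp0.le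
    nlinarith
  have hFb : ∀ N : ℕ, 1 ≤ N →
      ‖(N : ℝ)⁻¹ • ∑ n ∈ Finset.Icc 1 N, A ⌊(n : ℝ) ^ c⌋₊‖ ≤ ε/4 + D₀ * (N:ℝ)^(-m) := by
    intro N hN
    have hN0 : (0:ℝ) < (N:ℝ) := by exact_mod_cast hN
    have hN1 : (1:ℝ) ≤ (N:ℝ) := by exact_mod_cast hN
    have hk := key N hN
    rw [norm_smul, Real.norm_eq_abs, abs_of_pos (inv_pos.2 hN0)]
    have hNN : (N:ℝ)⁻¹ * (N:ℝ) = 1 := inv_mul_cancel₀ hN0.ne'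
    have hinv : (N:ℝ)⁻¹ = (N:ℝ)^(-1:ℝ) := (Real.rpow_neg_one _).symm
    have h_a : (N:ℝ)⁻¹ * (N:ℝ)^((1:ℝ)-c) ≤ (N:ℝ)^(-m) := by
      rw [hinv, ← Real.rpow_add hN0]
      exact Real.rpow_le_rpow_of_exponent_le hN1 (by linarith)
    have h_b : (N:ℝ)⁻¹ * (N:ℝ)^c ≤ (N:ℝ)^(-m) := by
      rw [hinv, ← Real.rpow_add hN0]
      exact Real.rpow_le_rpow_of_exponent_le hN1 (by linarith)
    have h_c : (N:ℝ)⁻¹ ≤ (N:ℝ)^(-m) := by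
      rw [hinv]
      exact Real.rpow_le_rpow_of_exponent_le hN1 (by linarith)
    have hCH : (0:ℝ) ≤ C * H := mul_nonneg hC0 hHpos.le
    have t1 : C * H * (2*p) * ((N:ℝ)⁻¹ * (N:ℝ)^((1:ℝ)-c)) ≤ C * H * (2*p) * (N:ℝ)^(-m) :=
      mul_le_mul_of_nonneg_left h_a (by positivity)
    have t2 : C * H * 2 * ((N:ℝ)⁻¹ * (N:ℝ)^c) ≤ C * H * 2 * (N:ℝ)^(-m) :=
      mul_le_mul_of_nonneg_left h_b (by positivity)
    have t3 : (C * H) * ((N:ℝ)⁻¹) ≤ (C * H) * (N:ℝ)^(-m) :=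
      mul_le_mul_of_nonneg_left h_c hCH
    have t4 : C * p * ((N:ℝ)⁻¹ * (N:ℝ)^((1:ℝ)-c)) ≤ C * p * (N:ℝ)^(-m) :=
      mul_le_mul_of_nonneg_left h_a (by positivity)
    have t5 : C * ((N:ℝ)⁻¹) ≤ C * (N:ℝ)^(-m) :=
      mul_le_mul_of_nonneg_left h_c hC0
    have hmono := mul_le_mul_of_nonneg_left hk (inv_nonneg.2 hN0.le)
    calc (N:ℝ)⁻¹ * ‖∑ n ∈ Finset.Icc 1 N, A ⌊(n : ℝ) ^ c⌋₊‖
        ≤ (N:ℝ)⁻¹ * (ε/4 * N + C * H * (2*p*(N:ℝ)^((1:ℝ)-c) + 2*(N:ℝ)^c + 1)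
            + C * (p*(N:ℝ)^((1:ℝ)-c) + 1)) := hmono
    _ ≤ ε/4 + D₀ * (N:ℝ)^(-m) := by
        rw [hD₀def]
        have hNN' : ε/4 * ((N:ℝ)⁻¹ * (N:ℝ)) = ε/4 := by rw [hNN]; ring
        linarith [t1, t2, t3, t4, t5, hNN']
  have hlim : Tendsto (fun N : ℕ => D₀ * (N:ℝ)^(-m)) atTop (nhds 0) := by
    have h1 : Tendsto (fun x : ℝ => x ^ (-m)) atTop (nhds 0) := tendsto_rpow_neg_atTop hm0
    have h2 : Tendsto (fun N : ℕ => ((N:ℝ))^(-m)) atTop (nhds 0) :=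
      h1.comp tendsto_natCast_atTop_atTop
    have h3 := h2.const_mul D₀
    simpa using h3
  have hev : ∀ᶠ N : ℕ in atTop, D₀ * ((N:ℝ))^(-m) < ε/2 :=
    hlim.eventually_lt_const (by linarith)
  obtain ⟨N₀, hN₀⟩ := Filter.eventually_atTop.1 (hev.and (eventually_ge_atTop 1))
  refine ⟨N₀, fun n hn => ?_⟩
  obtain ⟨hsm, hn1⟩ := hN₀ n hn
  rw [dist_zero_right, Real.norm_eq_abs, abs_of_nonneg (norm_nonneg _)]
  calc ‖(n : ℝ)⁻¹ • ∑ k ∈ Finset.Icc 1 n, A ⌊(k : ℝ) ^ c⌋₊‖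
      ≤ ε/4 + D₀ * ((n:ℝ))^(-m) := hFb n hn1
  _ < ε/4 + ε/2 := by linarith
  _ < ε := by linarith
end

section
/- Let c be a positive non-integer. Then for every L ∈ ℕ there exists n ∈ ℕ such that ⌊(n+j)^{c}⌋ is odd for every j = 0, 1, …, L; and likewise there exists n ∈ ℕ such that ⌊(n+j)^{c}⌋ is even for every j = 0, 1, …, L. In other words, the sequence (⌊n^{c}⌋) takes odd values, and takes even values, on arbitrarily long intervals of consecutive integers. -/
open Real Filter Finset Set

noncomputable def dd (c : ℝ) : ℕ → ℝ → ℝ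
  | 0 => fun x => x ^ c
  | (i+1) => fun x => dd c i (x+1) - dd c i x

lemma dd_hasDerivAt (c : ℝ) (i : ℕ) : ∀ {x : ℝ}, 0 < x →
    HasDerivAt (dd c i) (c * dd (c-1) i x) x := by
  induction i with
  | zero =>
      intro x hx
      simpa [dd] using Real.hasDerivAt_rpow_const (x := x) (p := c) (Or.inl hx.ne')
  | succ i ih =>
      intro x hx
      have h1 : HasDerivAt (fun y : ℝ => dd c i (y+1)) (c * dd (c-1) i (x+1)) x := by
        have := (ih (x := x+1) (by linarith)).comp x ((hasDerivAt_id x).add_const 1)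
        convert this using 1 <;> first | rfl | simp
      have h2 := ih hx
      simp only [dd]
      rw [mul_sub]
      exact h1.sub h2

lemma dd_eq (i : ℕ) : ∀ (c : ℝ) {x : ℝ}, 0 < x →
    ∃ ξ : ℝ, x ≤ ξ ∧ ξ ≤ x + i ∧ dd c i x = (∏ m ∈ Finset.range i, (c - m)) * ξ ^ (c - i) := by
  induction i with
  | zero =>
      intro c x hx
      exact ⟨x, le_refl x, by simp, by simp [dd]⟩
  | succ i ih =>
      intro c x hx
      have hcont : ContinuousOn (dd c i) (Set.Icc x (x+1)) := fun y hy =>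
        ((dd_hasDerivAt c i (lt_of_lt_of_le hx hy.1)).continuousAt).continuousWithinAt
      have hderiv : ∀ y ∈ Set.Ioo x (x+1), HasDerivAt (dd c i) (c * dd (c-1) i y) y :=
        fun y hy => dd_hasDerivAt c i (hx.trans hy.1)
      obtain ⟨η, hη, heq⟩ := exists_hasDerivAt_eq_slope (dd c i) _ (by linarith) hcont hderiv
      obtain ⟨ξ, hξ1, hξ2, hξ3⟩ := ih (c-1) (x := η) (hx.trans hη.1)
      refine ⟨ξ, by linarith [hη.1], by push_cast; linarith [hη.2], ?_⟩
      have hval : dd c (i+1) x = c * dd (c-1) i η := by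
        have : dd c (i+1) x = dd c i (x+1) - dd c i x := rfl
        rw [this]
        rw [heq]; ring
      rw [hval, hξ3, Finset.prod_range_succ']
      have hprod : ∏ m ∈ Finset.range i, (c - 1 - (m:ℝ)) = ∏ m ∈ Finset.range i, (c - ((m:ℕ)+1:ℕ)) := by
        apply Finset.prod_congr rfl
        intro m _
        push_cast; ring
      have hexp : c - 1 - (i:ℝ) = c - ((i:ℕ)+1:ℕ) := by push_cast; ring
      rw [hprod] at *
      rw [hexp]
      push_cast
      ring



lemma sum_incr_le (v : ℕ → ℝ) (a : ℕ) (b : ℝ) (J : ℕ)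
    (h : ∀ i < J, v (a+i+1) - v (a+i) ≤ b) : ∀ j ≤ J, v (a+j) ≤ v a + j * b := by
  intro j hj
  induction j with
  | zero => simp
  | succ j ih =>
      have h1 := ih (Nat.le_of_succ_le hj)
      have h2 := h j (by omega)
      push_cast
      calc v (a+(j+1)) = v (a+j+1) := by ring_nf
        _ ≤ v (a+j) + b := by linarith
        _ ≤ v a + (j+1) * b := by push_cast; linarith

lemma sum_incr_ge (v : ℕ → ℝ) (a : ℕ) (b : ℝ) (J : ℕ)
    (h : ∀ i < J, b ≤ v (a+i+1) - v (a+i)) : ∀ j ≤ J, v a + j * b ≤ v (a+j) := by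
  intro j hj
  induction j with
  | zero => simp
  | succ j ih =>
      have h1 := ih (Nat.le_of_succ_le hj)
      have h2 := h j (by omega)
      have : v (a+(j+1)) = v (a+j+1) := by ring_nf
      rw [this]
      push_cast
      push_cast at h1
      linarith

lemma cross (v : ℕ → ℝ) (N len : ℕ) (b T : ℝ)
    (hstep : ∀ i < len, v (N+i+1) - v (N+i) ≤ b)
    (h0 : v N < T) (h1 : T ≤ v (N+len)) :
    ∃ m, N ≤ m ∧ m ≤ N + len ∧ T ≤ v m ∧ v m < T + b := by
  classical
  have hex : ∃ i, T ≤ v (N+i) := ⟨len, h1⟩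
  set i₀ := Nat.find hex with hi₀def
  have hfind : T ≤ v (N + i₀) := Nat.find_spec hex
  have hlen : i₀ ≤ len := Nat.find_min' hex h1
  have hne : i₀ ≠ 0 := by
    intro h; rw [h] at hfind; simp at hfind; linarith
  obtain ⟨j, hj⟩ : ∃ j, i₀ = j + 1 := ⟨i₀ - 1, by omega⟩
  have hprev : v (N + j) < T := by
    have := Nat.find_min hex (m := j) (by omega)
    linarith [lt_of_not_ge this]
  have hb := hstep j (by omega)
  refine ⟨N + i₀, by omega, by omega, hfind, ?_⟩
  have : N + i₀ = N + j + 1 := by omega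
  rw [this]
  linarith


def Sprop (c : ℝ) (r : ℕ) : Prop :=
  ∀ ε : ℝ, 0 < ε → ∀ t : ℝ, ∀ H M : ℕ, ∃ n : ℕ, M ≤ n ∧ 1 ≤ n ∧
    ∀ m : ℕ, n ≤ m → m ≤ n + H → ∃ z : ℤ, |dd c r m / 2 - z - t| < ε


lemma step_down (c : ℝ) (s : ℕ) (hS : Sprop c (s+1)) : Sprop c s := by
  classical
  intro ε hε t H M
  obtain ⟨θ, hθdef⟩ : ∃ θ : ℝ, θ = ε / (2*(H+1)) := ⟨_, rfl⟩
  have hθ : 0 < θ := by rw [hθdef]; positivity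
  obtain ⟨len, hlendef⟩ : ∃ len : ℕ, len = ⌈2/θ⌉₊ := ⟨_, rfl⟩
  have hlen1 : 1 ≤ (len:ℝ) * (θ/2) := by
    have h2 : (2:ℝ)/θ ≤ len := by rw [hlendef]; exact Nat.le_ceil _
    have h3 : (0:ℝ) < θ/2 := by positivity
    calc (1:ℝ) = (2/θ) * (θ/2) := by field_simp
      _ ≤ len * (θ/2) := by gcongr
  obtain ⟨H', hH'def⟩ : ∃ H' : ℕ, H' = len + H := ⟨_, rfl⟩
  obtain ⟨n, hnM, hn1, hZ'⟩ := hS (θ/2) (by positivity) θ H' M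
  have hZex : ∀ m : ℕ, ∃ z : ℤ, (n ≤ m → m ≤ n + H' → |dd c (s+1) m / 2 - z - θ| < θ/2) := by
    intro m
    by_cases h : n ≤ m ∧ m ≤ n + H'
    · obtain ⟨z, hz⟩ := hZ' m h.1 h.2
      exact ⟨z, fun _ _ => hz⟩
    · exact ⟨0, fun h1 h2 => absurd ⟨h1, h2⟩ h⟩
  choose Z hZ using hZex
  -- corrected walk
  obtain ⟨w, hwdef⟩ : ∃ w : ℕ → ℝ, w = fun m =>
      dd c s n / 2 + ∑ i ∈ Finset.range (m - n), (dd c (s+1) (((n+i : ℕ) : ℝ)) / 2 - Z (n+i)) :=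
    ⟨_, rfl⟩
  have hwincr : ∀ m, n ≤ m → w (m+1) - w m = dd c (s+1) m / 2 - Z m := by
    intro m hm
    have h1 : m + 1 - n = (m - n) + 1 := by omega
    have h2 : n + (m - n) = m := by omega
    have h3 : (((n + (m-n) : ℕ)) : ℝ) = (m : ℝ) := by exact_mod_cast congrArg (Nat.cast : ℕ → ℝ) h2
    simp only [hwdef, h1, Finset.sum_range_succ, h2, h3]
    ring
  -- increments in (θ/2, 3θ/2) on the window
  have hwin : ∀ m, n ≤ m → m ≤ n + H' → θ/2 < w (m+1) - w m ∧ w (m+1) - w m < 3*θ/2 := by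
    intro m h1 h2
    have := hZ m h1 h2
    rw [abs_lt] at this
    rw [hwincr m h1]
    constructor <;> linarith [this.1, this.2]
  -- w differs from dd c s /2 by an integer
  have hint : ∀ i : ℕ, ∃ ζ : ℤ, dd c s (((n+i : ℕ)) : ℝ) / 2 = w (n+i) + ζ := by
    intro i
    induction i with
    | zero => exact ⟨0, by simp [hwdef]⟩
    | succ i ih =>
        obtain ⟨ζ, hζ⟩ := ih
        refine ⟨ζ + Z (n+i), ?_⟩
        have hrec : dd c (s+1) (((n+i:ℕ)):ℝ) = dd c s ((((n+i:ℕ)):ℝ)+1) - dd c s (((n+i:ℕ)):ℝ) := rfl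
        have hw := hwincr (n+i) (by omega)
        have e1 : (((n+(i+1):ℕ)):ℝ) = (((n+i:ℕ)):ℝ) + 1 := by push_cast; ring
        have e2 : n + (i+1) = (n+i)+1 := by omega
        rw [e1, e2]
        push_cast at hrec hw hζ ⊢
        linarith
  -- apply cross
  obtain ⟨z₀, hz₀def⟩ : ∃ z₀ : ℤ, z₀ = ⌊w n - t⌋ + 1 := ⟨_, rfl⟩
  obtain ⟨T, hTdef⟩ : ∃ T : ℝ, T = (z₀ : ℝ) + t := ⟨_, rfl⟩
  have hT0 : w n < T := by
    have := Int.lt_floor_add_one (w n - t)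
    rw [hTdef, hz₀def]
    push_cast
    linarith
  have hT1 : T ≤ w n + 1 := by
    have := Int.floor_le (w n - t)
    rw [hTdef, hz₀def]
    push_cast
    linarith
  have hsteps_le : ∀ i < len, w (n+i+1) - w (n+i) ≤ 3*θ/2 := by
    intro i hi
    exact (hwin (n+i) (by omega) (by omega)).2.le
  have hend : T ≤ w (n+len) := by
    have := sum_incr_ge w n (θ/2) len (fun i hi => (hwin (n+i) (by omega) (by omega)).1.le) len le_rfl
    linarith
  obtain ⟨m₀, hm₀1, hm₀2, hm₀3, hm₀4⟩ := cross w n len (3*θ/2) T hsteps_le hT0 hend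
  refine ⟨m₀, by omega, by omega, ?_⟩
  intro m hm1 hm2
  have hup : w m ≤ w m₀ + ((m - m₀ : ℕ) : ℝ) * (3*θ/2) := by
    have := sum_incr_le w m₀ (3*θ/2) H
      (fun i hi => (hwin (m₀+i) (by omega) (by omega)).2.le) (m - m₀) (by omega)
    have hmm : m₀ + (m - m₀) = m := by omega
    rwa [hmm] at this
  have hdn : w m₀ ≤ w m := by
    have := sum_incr_ge w m₀ 0 H
      (fun i hi => by linarith [(hwin (m₀+i) (by omega) (by omega)).1, hθ]) (m - m₀) (by omega)
    have hmm : m₀ + (m - m₀) = m := by omega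
    rw [hmm] at this
    simpa using this
  obtain ⟨ζ, hζ⟩ : ∃ ζ : ℤ, dd c s m / 2 = w m + ζ := by
    obtain ⟨ζ, hζ⟩ := hint (m - n)
    have h2 : n + (m - n) = m := by omega
    rw [h2] at hζ
    exact ⟨ζ, hζ⟩
  refine ⟨z₀ + ζ, ?_⟩
  have hbound : ((m - m₀ : ℕ) : ℝ) * (3*θ/2) ≤ (H:ℝ) * (3*θ/2) := by
    have h5 : ((m - m₀ : ℕ) : ℝ) ≤ (H:ℝ) := by exact_mod_cast (by omega : m - m₀ ≤ H)
    have h6 : (0:ℝ) ≤ 3*θ/2 := by positivity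
    nlinarith
  have hθε : ((H:ℝ) + 1) * (3*θ/2) < ε := by
    rw [hθdef]
    have hH1 : (0:ℝ) < (H:ℝ) + 1 := by positivity
    have heq : ((H:ℝ) + 1) * (3 * (ε / (2 * ((H:ℝ) + 1))) / 2) = (3/4) * ε := by
      field_simp
      ring
    rw [heq]
    linarith
  have habs : |w m - (z₀ : ℝ) - t| < ε := by
    rw [abs_lt]
    constructor
    · have h7 : T ≤ w m := le_trans hm₀3 hdn
      rw [hTdef] at h7
      linarith
    · have h8 : w m < T + ((H:ℝ)+1) * (3*θ/2) := by nlinarith [hbound, hup, hm₀4]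
      rw [hTdef] at h8
      linarith
  rw [hζ]
  have : w m + (ζ:ℝ) - ((z₀ + ζ : ℤ) : ℝ) - t = w m - (z₀:ℝ) - t := by push_cast; ring
  rw [this]
  exact habs


lemma top_level (c : ℝ) (K : ℕ) (h1 : (K:ℝ) < c) (h2 : c < K + 1) : Sprop c K := by
  classical
  intro ε hε t H M
  -- positivity of factor products
  have hP' : 0 < ∏ m ∈ Finset.range K, (c - (m:ℝ)) := by
    apply Finset.prod_pos
    intro m hm
    have : (m:ℝ) < K := by exact_mod_cast Finset.mem_range.mp hm
    linarith
  have hP : 0 < ∏ m ∈ Finset.range (K+1), (c - (m:ℝ)) := by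
    apply Finset.prod_pos
    intro m hm
    have : (m:ℝ) < K + 1 := by exact_mod_cast Finset.mem_range.mp hm
    have : (m:ℝ) ≤ K := by
      have := Finset.mem_range.mp hm
      exact_mod_cast Nat.lt_succ_iff.mp this
    linarith
  set P : ℝ := ∏ m ∈ Finset.range (K+1), (c - (m:ℝ)) with hPdef
  set P' : ℝ := ∏ m ∈ Finset.range K, (c - (m:ℝ)) with hP'def
  -- positivity of the (K+1)-st difference
  have hpos : ∀ x : ℝ, 0 < x → 0 < dd c (K+1) x := by
    intro x hx
    obtain ⟨ξ, hξ1, hξ2, hξ3⟩ := dd_eq (K+1) c hx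
    rw [hξ3]
    have : (0:ℝ) < ξ := lt_of_lt_of_le hx hξ1
    positivity
  -- upper bound for the (K+1)-st difference
  have hupper : ∀ x : ℝ, 0 < x → dd c (K+1) x ≤ P * x ^ (c - (K+1:ℕ)) := by
    intro x hx
    obtain ⟨ξ, hξ1, hξ2, hξ3⟩ := dd_eq (K+1) c hx
    rw [hξ3]
    have hexp : c - ((K+1:ℕ):ℝ) ≤ 0 := by push_cast; linarith
    have := Real.rpow_le_rpow_of_nonpos hx hξ1 hexp
    have hP0 : (0:ℝ) ≤ P := hP.le
    nlinarith
  -- lower bound for the K-th difference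
  have hlower : ∀ x : ℝ, 0 < x → P' * x ^ (c - (K:ℕ)) ≤ dd c K x := by
    intro x hx
    obtain ⟨ξ, hξ1, hξ2, hξ3⟩ := dd_eq K c hx
    rw [hξ3]
    have hexp : (0:ℝ) ≤ c - ((K:ℕ):ℝ) := by push_cast; linarith
    have := Real.rpow_le_rpow hx.le hξ1 hexp
    nlinarith
  obtain ⟨δ, hδdef⟩ : ∃ δ : ℝ, δ = ε / (H+1) := ⟨_, rfl⟩
  have hδ : 0 < δ := by rw [hδdef]; positivity
  -- eventually small increments
  have hsmall : ∃ M₀ : ℕ, ∀ n : ℕ, M₀ ≤ n → P * (n:ℝ) ^ (c - (K+1:ℕ)) / 2 < δ := by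
    have t1 : Tendsto (fun x : ℝ => x ^ (c - ((K+1:ℕ):ℝ))) atTop (nhds 0) := by
      have := tendsto_rpow_neg_atTop (y := ((K+1:ℕ):ℝ) - c) (by push_cast; linarith)
      simpa [neg_sub] using this
    have t2 : Tendsto (fun n : ℕ => P * ((n:ℝ)) ^ (c - ((K+1:ℕ):ℝ)) / 2) atTop (nhds 0) := by
      have t3 := (t1.comp tendsto_natCast_atTop_atTop).const_mul (P/2)
      simp only [mul_zero] at t3
      refine t3.congr fun n => ?_
      simp [Function.comp]
      ring
    have := t2.eventually_lt_const hδ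
    rw [eventually_atTop] at this
    obtain ⟨M₀, hM₀⟩ := this
    exact ⟨M₀, hM₀⟩
  obtain ⟨M₀, hM₀⟩ := hsmall
  obtain ⟨M', hM'def⟩ : ∃ M' : ℕ, M' = max (max M M₀) 1 := ⟨_, rfl⟩
  have hM'1 : 1 ≤ M' := by omega
  have hM'M : M ≤ M' := by omega
  have hM'M₀ : M₀ ≤ M' := by omega
  -- the walk
  obtain ⟨v, hvdef⟩ : ∃ v : ℕ → ℝ, v = fun n : ℕ => dd c K n / 2 := ⟨_, rfl⟩
  have hvincr : ∀ m : ℕ, v (m+1) - v m = dd c (K+1) m / 2 := by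
    intro m
    have hrec : dd c (K+1) ((m:ℕ):ℝ) = dd c K (((m:ℕ):ℝ)+1) - dd c K ((m:ℕ):ℝ) := rfl
    have e1 : (((m+1:ℕ)):ℝ) = ((m:ℕ):ℝ) + 1 := by push_cast; ring
    rw [hvdef]
    simp only [e1]
    rw [hrec]
    ring
  have hstep_bounds : ∀ m : ℕ, M' ≤ m → 0 < v (m+1) - v m ∧ v (m+1) - v m < δ := by
    intro m hm
    have hm1 : (0:ℝ) < (m:ℝ) := by
      have : 1 ≤ m := le_trans hM'1 hm
      exact_mod_cast Nat.lt_of_lt_of_le Nat.zero_lt_one this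
    rw [hvincr m]
    constructor
    · have := hpos m hm1
      linarith
    · have := hupper m hm1
      have := hM₀ m (le_trans hM'M₀ hm)
      linarith
  obtain ⟨z₀, hz₀def⟩ : ∃ z₀ : ℤ, z₀ = ⌊v M' - t⌋ + 1 := ⟨_, rfl⟩
  obtain ⟨T, hTdef⟩ : ∃ T : ℝ, T = (z₀ : ℝ) + t := ⟨_, rfl⟩
  have hT0 : v M' < T := by
    have := Int.lt_floor_add_one (v M' - t)
    rw [hTdef, hz₀def]; push_cast; linarith
  -- divergence: find N₁ ≥ M' with T ≤ v N₁
  have hdiv : ∃ N₁ : ℕ, M' ≤ N₁ ∧ T ≤ v N₁ := by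
    have t1 : Tendsto (fun x : ℝ => x ^ (c - ((K:ℕ):ℝ))) atTop atTop :=
      tendsto_rpow_atTop (by push_cast; linarith)
    have t2 : Tendsto (fun n : ℕ => (P'/2) * ((n:ℝ)) ^ (c - ((K:ℕ):ℝ))) atTop atTop := by
      apply Tendsto.const_mul_atTop (by positivity)
      exact t1.comp tendsto_natCast_atTop_atTop
    have := t2.eventually_ge_atTop T
    rw [eventually_atTop] at this
    obtain ⟨N₂, hN₂⟩ := this
    refine ⟨max M' (max N₂ 1), by omega, ?_⟩
    set N₁ := max M' (max N₂ 1) with hN₁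
    have hN₁pos : (0:ℝ) < (N₁:ℝ) := by
      have : 1 ≤ N₁ := by omega
      exact_mod_cast Nat.lt_of_lt_of_le Nat.zero_lt_one this
    have hl := hlower N₁ hN₁pos
    have hg := hN₂ N₁ (by omega)
    rw [hvdef]
    simp only
    linarith
  obtain ⟨N₁, hN₁M', hN₁T⟩ := hdiv
  obtain ⟨len, hlendef⟩ : ∃ len : ℕ, len = N₁ - M' := ⟨_, rfl⟩
  have hMlen : M' + len = N₁ := by omega
  obtain ⟨m₀, hm₀1, hm₀2, hm₀3, hm₀4⟩ := cross v M' len δ T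
    (fun i hi => (hstep_bounds (M'+i) (by omega)).2.le)
    hT0 (by rw [hMlen]; exact hN₁T)
  refine ⟨m₀, by omega, by omega, ?_⟩
  intro m hm1 hm2
  have hup : v m ≤ v m₀ + ((m - m₀ : ℕ) : ℝ) * δ := by
    have := sum_incr_le v m₀ δ H
      (fun i hi => (hstep_bounds (m₀+i) (by omega)).2.le) (m - m₀) (by omega)
    have hmm : m₀ + (m - m₀) = m := by omega
    rwa [hmm] at this
  have hdn : v m₀ ≤ v m := by
    have := sum_incr_ge v m₀ 0 H
      (fun i hi => by linarith [(hstep_bounds (m₀+i) (by omega)).1]) (m - m₀) (by omega)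
    have hmm : m₀ + (m - m₀) = m := by omega
    rw [hmm] at this
    simpa using this
  refine ⟨z₀, ?_⟩
  have hbound : ((m - m₀ : ℕ) : ℝ) * δ ≤ (H:ℝ) * δ := by
    have h5 : ((m - m₀ : ℕ) : ℝ) ≤ (H:ℝ) := by exact_mod_cast (by omega : m - m₀ ≤ H)
    nlinarith
  have hδε : ((H:ℝ)+1) * δ = ε := by
    rw [hδdef]
    field_simp
  have hveq : dd c K (m:ℝ) / 2 = v m := by rw [hvdef]
  rw [hveq, abs_lt]
  constructor
  · have h7 : T ≤ v m := le_trans hm₀3 hdn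
    rw [hTdef] at h7
    linarith
  · have h8 : v m < T + ((H:ℝ)+1) * δ := by nlinarith [hbound, hup, hm₀4]
    rw [hTdef] at h8
    linarith


/-- For a positive non-integer `c`, the sequence `(⌊n^c⌋)` takes odd values
on arbitrarily long intervals of consecutive integers, and likewise even values. -/
theorem statement16 (c : ℝ) (hc_pos : 0 < c) (hc_nonint : ∀ k : ℤ, c ≠ (k : ℝ)) :
    ∀ L : ℕ,
      (∃ n : ℕ, 0 < n ∧ ∀ j : ℕ, j ≤ L → Odd ⌊((n + j : ℕ) : ℝ) ^ c⌋₊) ∧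
      (∃ n : ℕ, 0 < n ∧ ∀ j : ℕ, j ≤ L → Even ⌊((n + j : ℕ) : ℝ) ^ c⌋₊) := by
  intro L
  set K : ℕ := ⌊c⌋₊ with hKdef
  have h1 : (K:ℝ) < c := by
    rcases lt_or_eq_of_le (Nat.floor_le hc_pos.le) with h | h
    · exact h
    · exact absurd h.symm (by exact_mod_cast hc_nonint (K : ℤ))
  have h2 : c < K + 1 := Nat.lt_floor_add_one c
  have hS0 : Sprop c 0 := by
    have hdown : ∀ d : ℕ, Sprop c (K - d) := by
      intro d
      induction d with
      | zero => simpa using top_level c K h1 h2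
      | succ d ih =>
          rcases h : K - d with _ | s
          · have e : K - (d+1) = 0 := by omega
            rw [e]
            rw [h] at ih
            exact ih
          · have e : K - (d+1) = s := by omega
            rw [e]
            rw [h] at ih
            exact step_down c s ih
    have := hdown K
    simpa using this
  have hdd0 : ∀ x : ℝ, dd c 0 x = x ^ c := fun _ => rfl
  have hone : ∀ m : ℕ, 1 ≤ m → (1:ℝ) ≤ ((m:ℕ):ℝ) ^ c := by
    intro m hm
    have hm1 : (1:ℝ) ≤ (m:ℝ) := by exact_mod_cast hm
    calc (1:ℝ) = (1:ℝ) ^ c := (Real.one_rpow c).symm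
      _ ≤ (m:ℝ) ^ c := Real.rpow_le_rpow (by norm_num) hm1 hc_pos.le
  constructor
  · -- Odd values
    obtain ⟨n, hnM, hn1, hprop⟩ := hS0 (1/4) (by norm_num) (3/4) L 1
    refine ⟨n, hn1, ?_⟩
    intro j hj
    obtain ⟨z, hz⟩ := hprop (n + j) (by omega) (by omega)
    rw [hdd0, abs_lt] at hz
    set x : ℝ := ((n + j : ℕ) : ℝ) ^ c with hxdef
    have hx1 : (1:ℝ) ≤ x := hone (n+j) (by omega)
    have hlow : 2*(z:ℝ) + 1 < x := by linarith [hz.1]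
    have hhigh : x < 2*(z:ℝ) + 2 := by linarith [hz.2]
    have hz0 : 0 ≤ z := by
      by_contra h
      push_neg at h
      have hz1 : z ≤ -1 := by omega
      have : (z:ℝ) ≤ -1 := by exact_mod_cast hz1
      linarith
    have hzt : ((z.toNat : ℕ) : ℝ) = (z:ℝ) := by exact_mod_cast Int.toNat_of_nonneg hz0
    have hfl : ⌊x⌋₊ = 2 * z.toNat + 1 := by
      rw [Nat.floor_eq_iff (by linarith : (0:ℝ) ≤ x)]
      constructor
      · push_cast [hzt]
        linarith
      · push_cast [hzt]
        linarith
    rw [hfl]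
    exact ⟨z.toNat, by ring⟩
  · -- Even values
    obtain ⟨n, hnM, hn1, hprop⟩ := hS0 (1/4) (by norm_num) (1/4) L 1
    refine ⟨n, hn1, ?_⟩
    intro j hj
    obtain ⟨z, hz⟩ := hprop (n + j) (by omega) (by omega)
    rw [hdd0, abs_lt] at hz
    set x : ℝ := ((n + j : ℕ) : ℝ) ^ c with hxdef
    have hx1 : (1:ℝ) ≤ x := hone (n+j) (by omega)
    have hlow : 2*(z:ℝ) < x := by linarith [hz.1]
    have hhigh : x < 2*(z:ℝ) + 1 := by linarith [hz.2]
    have hz0 : 0 ≤ z := by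
      by_contra h
      push_neg at h
      have hz1 : z ≤ -1 := by omega
      have : (z:ℝ) ≤ -1 := by exact_mod_cast hz1
      linarith
    have hzt : ((z.toNat : ℕ) : ℝ) = (z:ℝ) := by exact_mod_cast Int.toNat_of_nonneg hz0
    have hfl : ⌊x⌋₊ = 2 * z.toNat := by
      rw [Nat.floor_eq_iff (by linarith : (0:ℝ) ≤ x)]
      constructor
      · push_cast [hzt]
        linarith
      · push_cast [hzt]
        linarith
    rw [hfl]
    exact ⟨z.toNat, by ring⟩
end

section
/- Let (a(n))_{n∈ℕ} be a sequence of integers with a(n+1) − a(n) → ∞ as n → ∞, and let k ∈ ℕ with k ≠ 1. Then there exists a thick set E ⊆ ℕ such that the equation x − k·y = a(n) has no solution with x, y ∈ E and n ∈ ℕ. -/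
open Filter

/-- Any finite initial segment of an integer sequence is bounded above. -/
lemma aux_bdd (f : ℕ → ℤ) (N : ℕ) : ∃ D : ℤ, ∀ n < N, f n ≤ D := by
  induction N with
  | zero => exact ⟨0, fun n hn => absurd hn (Nat.not_lt_zero n)⟩
  | succ N ih =>
    obtain ⟨D, hD⟩ := ih
    refine ⟨max D (f N), fun n hn => ?_⟩
    rcases Nat.lt_succ_iff_lt_or_eq.mp hn with h | h
    · exact (hD n h).trans (le_max_left _ _)
    · subst h; exact le_max_right _ _

/-- Eventual monotonicity on the tail. -/
lemma aux_mono (a : ℕ → ℤ) (N : ℕ) (c : ℤ) (hc : 0 ≤ c)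
    (hstep : ∀ n, N ≤ n → a n + c ≤ a (n + 1)) :
    ∀ p q, N ≤ p → p ≤ q → a p ≤ a q := by
  intro p q hNp hpq
  induction q, hpq using Nat.le_induction with
  | base => exact le_rfl
  | succ q hpq ih =>
    have := hstep q (hNp.trans hpq)
    omega

/-- Growth on the tail. -/
lemma aux_grow (a : ℕ → ℤ) (N : ℕ) (c : ℤ) (hc : 1 ≤ c)
    (hstep : ∀ n, N ≤ n → a n + c ≤ a (n + 1)) :
    ∀ s : ℕ, a N + s ≤ a (N + s) := by
  intro s
  induction s with
  | zero => simp
  | succ s ih =>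
    have := hstep (N + s) (Nat.le_add_right _ _)
    have h2 : N + (s + 1) = (N + s) + 1 := by omega
    rw [h2]
    push_cast
    omega

/-- Gap lemma: the range of `a` misses arbitrarily large windows of any prescribed width. -/
lemma aux_gap (a : ℕ → ℤ)
    (ha : Tendsto (fun n => a (n + 1) - a n) atTop atTop) :
    ∀ W C : ℕ, ∃ m : ℕ, C ≤ m ∧
      ∀ t : ℤ, (m : ℤ) - W ≤ t → t ≤ (m : ℤ) + W → ∀ n, a n ≠ t := by
  intro W C
  obtain ⟨N, hN⟩ := Filter.eventually_atTop.mp (ha.eventually_ge_atTop (2 * (W : ℤ) + 2))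
  have hstep : ∀ n, N ≤ n → a n + (2 * (W : ℤ) + 2) ≤ a (n + 1) := by
    intro n hn
    have := hN n hn
    try simp only at this
    omega
  obtain ⟨D, hD⟩ := aux_bdd a N
  set M : ℤ := max (max D (C : ℤ)) 0 with hM
  have hMD : D ≤ M := le_trans (le_max_left _ _) (le_max_left _ _)
  have hMC : (C : ℤ) ≤ M := le_trans (le_max_right _ _) (le_max_left _ _)
  have hM0 : (0 : ℤ) ≤ M := le_max_right _ _
  set s : ℕ := (M - a N).toNat with hs
  set n₀ : ℕ := N + s with hn₀
  have hDn : M ≤ a n₀ := by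
    have h1 := aux_grow a N (2 * (W : ℤ) + 2) (by omega) hstep s
    rw [← hn₀] at h1
    omega
  set m : ℕ := (a n₀).toNat + W + 1 with hm
  have hmz : (m : ℤ) = a n₀ + W + 1 := by
    have : 0 ≤ a n₀ := le_trans hM0 hDn
    push_cast [hm]
    omega
  refine ⟨m, by omega, fun t ht1 ht2 n hant => ?_⟩
  rcases lt_or_ge n N with h | h
  · have := hD n h
    omega
  · rcases le_or_gt n n₀ with h2 | h2
    · have := aux_mono a N (2 * (W : ℤ) + 2) (by omega) hstep n n₀ h h2
      omega
    · have hs1 := hstep n₀ (Nat.le_add_right _ _)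
      have := aux_mono a N (2 * (W : ℤ) + 2) (by omega) hstep (n₀ + 1) n
        (by omega) h2
      omega

/-- The sequence is bounded below. -/
lemma aux_lower (a : ℕ → ℤ)
    (ha : Tendsto (fun n => a (n + 1) - a n) atTop atTop) :
    ∃ B : ℤ, ∀ n, B ≤ a n := by
  obtain ⟨N, hN⟩ := Filter.eventually_atTop.mp (ha.eventually_ge_atTop 1)
  have hstep : ∀ n, N ≤ n → a n + 1 ≤ a (n + 1) := by
    intro n hn
    have := hN n hn
    try simp only at this
    omega
  obtain ⟨D, hD⟩ := aux_bdd (fun n => -a n) N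
  refine ⟨min (-D) (a N), fun n => ?_⟩
  rcases lt_or_ge n N with h | h
  · have := hD n h
    try simp only at this
    omega
  · have := aux_mono a N 1 one_pos.le hstep N n le_rfl h
    omega

/-- If `(a(n))` is a sequence of integers with `a(n+1) − a(n) → ∞` and
`k ∈ ℕ`, `k ≠ 1`, then there is a thick set `E` of positive integers such that the equation
`x − k·y = a(n)` has no solution with `x, y ∈ E` and `n ∈ ℕ`. -/
theorem statement19 (a : ℕ → ℤ)
    (ha : Tendsto (fun n => a (n + 1) - a n) atTop atTop)
    (k : ℕ) (hk : 0 < k) (hk1 : k ≠ 1) :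
    ∃ E : Set ℕ, (∀ x ∈ E, 0 < x) ∧
      (∀ L : ℕ, ∃ m : ℕ, 0 < m ∧ ∀ j : ℕ, j ≤ L → m + j ∈ E) ∧
      ¬ ∃ x ∈ E, ∃ y ∈ E, ∃ n : ℕ, (x : ℤ) - (k : ℤ) * (y : ℤ) = a n := by
  have hk2 : 2 ≤ k := by omega
  obtain ⟨B, hB⟩ := aux_lower a ha
  choose g hgC hgW using aux_gap a ha
  -- inductively chosen base points of the intervals
  set b : ℕ → ℕ := fun i => Nat.rec (g 0 (B.natAbs + 1))
    (fun i bi => g (k * (bi + i + 1) + (i + 1)) (max (bi + 1) (i + 2 + B.natAbs))) i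
    with hbdef
  have hbS : ∀ i, b (i + 1) =
      g (k * (b i + i + 1) + (i + 1)) (max (b i + 1) (i + 2 + B.natAbs)) := fun i => rfl
  have hP1 : ∀ i, i + B.natAbs + 1 ≤ b i := by
    intro i
    cases i with
    | zero => simpa [hbdef] using hgC 0 (B.natAbs + 1)
    | succ i =>
      have := hgC (k * (b i + i + 1) + (i + 1)) (max (b i + 1) (i + 2 + B.natAbs))
      rw [← hbS] at this
      omega
  have hP2 : StrictMono b := by
    apply strictMono_nat_of_lt_succ
    intro i
    have := hgC (k * (b i + i + 1) + (i + 1)) (max (b i + 1) (i + 2 + B.natAbs))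
    rw [← hbS] at this
    omega
  refine ⟨{x | ∃ i, b i ≤ x ∧ x ≤ b i + i}, ?_, ?_, ?_⟩
  · rintro x ⟨i, h1, h2⟩
    have := hP1 i
    omega
  · intro L
    exact ⟨b L, by have := hP1 L; omega, fun j hj => ⟨L, by omega, by omega⟩⟩
  · rintro ⟨x, ⟨i, hxi1, hxi2⟩, y, ⟨j, hyj1, hyj2⟩, n, heq⟩
    rcases le_or_gt i j with hij | hij
    · -- x - k y is very negative, below B
      have hbij : b i ≤ b j := hP2.monotone hij
      have hky : 2 * (b j : ℤ) ≤ (k : ℤ) * y := by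
        have : (2 : ℤ) * (b j : ℤ) ≤ (k : ℤ) * (b j : ℤ) :=
          mul_le_mul_of_nonneg_right (by exact_mod_cast hk2) (by positivity)
        have h2 : (k : ℤ) * (b j : ℤ) ≤ (k : ℤ) * y :=
          mul_le_mul_of_nonneg_left (by exact_mod_cast hyj1) (by positivity)
        omega
      have hBn := hB n
      have hP1j := hP1 j
      have hBabs : -(B.natAbs : ℤ) ≤ B := by omega
      -- a n = x - k y ≤ b j + j - 2 b j = j - b j ≤ -(natAbs B + 1) < B
      have hx : (x : ℤ) ≤ (b j : ℤ) + j := by exact_mod_cast by omega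
      omega
    · -- j < i, so i = i' + 1 and window of b i excludes a n
      obtain ⟨i', rfl⟩ : ∃ i', i = i' + 1 := ⟨i - 1, by omega⟩
      have hji' : j ≤ i' := by omega
      have hbji : b j ≤ b i' := hP2.monotone hji'
      set W : ℕ := k * (b i' + i' + 1) + (i' + 1) with hW
      have hwin := hgW W (max (b i' + 1) (i' + 2 + B.natAbs)) (a n)
      rw [← hbS i'] at hwin
      have hkynn : 0 ≤ (k : ℤ) * y := by positivity
      have hky2 : (k : ℤ) * y ≤ (k : ℤ) * (b j + j) := by
        apply mul_le_mul_of_nonneg_left _ (by positivity)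
        exact_mod_cast by omega
      have hkW : (k : ℤ) * ((b j : ℤ) + j) ≤ (k : ℤ) * (b i' + i' + 1) := by
        apply mul_le_mul_of_nonneg_left _ (by positivity)
        exact_mod_cast by omega
      have hWcast : (W : ℤ) = (k : ℤ) * (b i' + i' + 1) + (i' + 1) := by
        push_cast [hW]; ring
      have hx2 : (x : ℤ) ≤ (b (i' + 1) : ℤ) + (i' + 1) := by exact_mod_cast by omega
      have hx1 : (b (i' + 1) : ℤ) ≤ x := by exact_mod_cast hxi1
      exact hwin (by omega) (by omega) n rfl
end
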